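/- Under the hypotheses of the global-node lemma (v adjacent to all nodes including itself, no other self-loops), the global node v strictly maximizes the subgraph centrality: ∑_{k≥0} (A^k)_{vv}/k! > ∑_{k≥0} (A^k)_{uu}/k! for every vertex u ≠ v. -/

import Mathlib

private lemma pow_entry_nonneg {V : Type*} [Fintype V] [DecidableEq V]
    (A : Matrix V V ℝ) (h01 : ∀ i j, A i j = 0 ∨ A i j = 1) :
    ∀ k i j, 0 ≤ (A ^ k) i j := by
  intro k
  induction k with
  | zero => intro i j; simp [Matrix.one_apply]; split <;> norm_num
  | succ n ih =>
    intro i j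
    rw [pow_succ, Matrix.mul_apply]
    refine Finset.sum_nonneg fun l _ => mul_nonneg (ih i l) ?_
    rcases h01 l j with h | h <;> simp [h]

private lemma pow_entry_bound {V : Type*} [Fintype V] [DecidableEq V] [Nonempty V]
    (A : Matrix V V ℝ) (h01 : ∀ i j, A i j = 0 ∨ A i j = 1) :
    ∀ k i j, (A ^ k) i j ≤ (Fintype.card V : ℝ) ^ k := by
  have hcard : (1:ℝ) ≤ (Fintype.card V : ℝ) := by
    exact_mod_cast Fintype.card_pos
  intro k
  induction k with
  | zero => intro i j; simp [Matrix.one_apply]; split <;> norm_num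
  | succ n ih =>
    intro i j
    rw [pow_succ', Matrix.mul_apply]
    calc ∑ l, A i l * (A ^ n) l j ≤ ∑ _l : V, 1 * (Fintype.card V : ℝ) ^ n := by
          refine Finset.sum_le_sum fun l _ => ?_
          have h1 := pow_entry_nonneg A h01 n l j
          have := ih l j
          have hA : A i l ≤ 1 := by rcases h01 i l with h | h <;> simp [h]
          have hA0 : (0:ℝ) ≤ A i l := by rcases h01 i l with h | h <;> simp [h]
          nlinarith
      _ = (Fintype.card V : ℝ) ^ (n+1) := by
          simp [Finset.sum_const, Finset.card_univ, pow_succ]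
          ring

/-- Under the global-node hypotheses, the global node `v` strictly maximizes the subgraph
centrality `∑_{k≥0} (A^k)_{ii}/k!`. -/
theorem global_node_max_subgraph_centrality {V : Type*} [Fintype V] [DecidableEq V]
    (A : Matrix V V ℝ) (hsymm : A.IsSymm)
    (h01 : ∀ i j, A i j = 0 ∨ A i j = 1)
    (v : V) (hrow : ∀ u, A v u = 1)
    (hdiag : ∀ u, u ≠ v → A u u = 0)
    (u : V) (hu : u ≠ v) :
    ∑' k : ℕ, (A ^ k) u u / (Nat.factorial k : ℝ) < ∑' k : ℕ, (A ^ k) v v / (Nat.factorial k : ℝ) := by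
  have hnn := pow_entry_nonneg A h01
  have hcol : ∀ w, A w v = 1 := fun w => by
    have := congrFun (congrFun hsymm.eq w) v
    simpa [Matrix.transpose_apply, hrow w] using this.symm
  -- pointwise inequality
  have hle : ∀ k, (A ^ k) u u ≤ (A ^ k) v v := by
    intro k
    match k with
    | 0 => simp
    | 1 => simpa [hdiag u hu, hrow v] using (by norm_num : (0:ℝ) ≤ 1)
    | (m+2) =>
      have hrw : ∀ w, (A ^ (m+2)) w w = ∑ i, ∑ j, A w i * (A ^ m) i j * A j w := by
        intro w
        have : A ^ (m+2) = A * A ^ m * A := by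
          rw [pow_succ, pow_succ']
        rw [this, Matrix.mul_apply]
        simp_rw [Matrix.mul_apply, Finset.sum_mul]
        rw [Finset.sum_comm]
      rw [hrw u, hrw v]
      refine Finset.sum_le_sum fun i _ => Finset.sum_le_sum fun j _ => ?_
      rw [hrow i, hcol j, one_mul, mul_one]
      have h1 : A u i ≤ 1 := by rcases h01 u i with h | h <;> simp [h]
      have h2 : A j u ≤ 1 := by rcases h01 j u with h | h <;> simp [h]
      have h3 : 0 ≤ A u i := by rcases h01 u i with h | h <;> simp [h]
      have h4 : 0 ≤ A j u := by rcases h01 j u with h | h <;> simp [h]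
      calc A u i * (A ^ m) i j * A j u ≤ A u i * (A ^ m) i j :=
            mul_le_of_le_one_right (mul_nonneg h3 (hnn m i j)) h2
        _ ≤ (A ^ m) i j := mul_le_of_le_one_left (hnn m i j) h1
  have hstrict : (A ^ 1) u u / (Nat.factorial 1 : ℝ) < (A ^ 1) v v / (Nat.factorial 1 : ℝ) := by
    simp [hdiag u hu, hrow v]
  have hsum : Summable (fun k : ℕ => ((Fintype.card V : ℝ) ^ k / k.factorial + 1 ^ k / k.factorial)) :=
    (Real.summable_pow_div_factorial _).add (Real.summable_pow_div_factorial 1)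
  refine Summable.tsum_lt_tsum_of_nonneg (fun k => div_nonneg (hnn k u u) (by positivity))
    (fun k => by gcongr; exact hle k) hstrict ?_
  refine Summable.of_nonneg_of_le (fun k => div_nonneg (hnn k v v) (by positivity))
    (fun k => ?_) hsum
  have : Nonempty V := ⟨v⟩
  have hb := pow_entry_bound A h01 k v v
  rw [one_pow, ← add_div]
  gcongr
  linarith
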